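/- The sequence defined by φ_{2n} = φ_{2n+1} = ∏_{j=1}^n (1 + 1/(2j-1)) (with φ_0 = φ_1 = 1) solves the discrete Schrödinger equation u(n+1) + u(n-1) + ((-1)^n/n) u(n) = 2 u(n) for all n ≥ 1. -/

import Mathlib

lemma prod_step (k : ℕ) :
    (∏ j ∈ Finset.Icc 1 (k+1), (1 + 1/(2*(j:ℝ) - 1)))
      = (∏ j ∈ Finset.Icc 1 k, (1 + 1/(2*(j:ℝ) - 1))) * (1 + 1/(2*(k:ℝ)+1)) := by
  rw [Finset.prod_Icc_succ_top (by omega : 1 ≤ k + 1)]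
  congr 2
  push_cast
  ring

/-- The sequence `φ` with `φ (2n) = φ (2n+1) = ∏_{j=1}^n (1 + 1/(2j-1))` solves the
discrete Schrödinger equation `u(n+1) + u(n-1) + ((-1)^n/n) u(n) = 2 u(n)` for `n ≥ 1`. -/
theorem stmt0 (φ : ℕ → ℝ)
    (hφeven : ∀ n : ℕ, φ (2*n) = ∏ j ∈ Finset.Icc 1 n, (1 + 1/(2*(j:ℝ) - 1)))
    (hφodd : ∀ n : ℕ, φ (2*n+1) = ∏ j ∈ Finset.Icc 1 n, (1 + 1/(2*(j:ℝ) - 1))) :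
    ∀ n : ℕ, 1 ≤ n → φ (n+1) + φ (n-1) + ((-1)^n/(n:ℝ)) * φ n = 2 * φ n := by
  intro n hn
  rcases Nat.even_or_odd n with ⟨m, hm⟩ | ⟨m, hm⟩
  · -- n = 2m with m ≥ 1
    obtain ⟨k, rfl⟩ : ∃ k, m = k + 1 := ⟨m - 1, by omega⟩
    have h1 : n + 1 = 2*(k+1) + 1 := by omega
    have h2 : n - 1 = 2*k + 1 := by omega
    have h3 : n = 2*(k+1) := by omega
    rw [h1, h2, hφodd, hφodd, h3, hφeven, prod_step]
    have hpow : ((-1:ℝ))^(2*(k+1)) = 1 := by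
      rw [pow_mul]; norm_num
    rw [hpow]
    have hk1 : (2*(k:ℝ)+1) ≠ 0 := by positivity
    have hk2 : ((2*(k+1):ℕ):ℝ) ≠ 0 := by positivity
    field_simp
    push_cast
    ring
  · -- n = 2m + 1
    have h1 : n + 1 = 2*(m+1) := by omega
    have h2 : n - 1 = 2*m := by omega
    have h3 : n = 2*m + 1 := by omega
    rw [h1, h2, hφeven, hφeven, h3, hφodd, prod_step]
    have hpow : ((-1:ℝ))^(2*m+1) = -1 := by
      rw [pow_succ, pow_mul]; norm_num
    rw [hpow]
    have hm1 : ((2*m+1:ℕ):ℝ) ≠ 0 := by positivity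
    field_simp
    push_cast
    ring
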